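/- arXiv:1305.5293 — 3 statements merged into one kernel-verified Lean document; each statement's English description precedes it below -/
import Mathlib

section
/- Let p, z, i be natural numbers with i < p. Then, as an identity of integers, ∑_{k=⌈i/(z+1)⌉}^{p} (-1)^{k+1} · C(p,k) · C(k·(z+1), i) = 0, where the sum runs over integers k from ⌈i/(z+1)⌉ to p. Equivalently, since C(k·(z+1), i) = 0 whenever k·(z+1) < i, the same alternating sum taken over all k from 0 to p vanishes. -/
open Polynomial Finset

lemma coeff_one_sub_X_pow (n i : ℕ) :
    ((1 - X : Polynomial ℤ) ^ n).coeff i = (-1) ^ i * n.choose i := by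
  have h : (1 - X : Polynomial ℤ) = (C (-1) * X) + 1 := by simp; ring
  rw [h, add_pow, finset_sum_coeff]
  have ht : ∀ k ∈ range (n + 1),
      ((C (-1 : ℤ) * X) ^ k * 1 ^ (n - k) * (n.choose k : Polynomial ℤ)).coeff i
        = if k = i then ((-1 : ℤ) ^ i * n.choose i) else 0 := by
    intro k _
    rw [one_pow, mul_one, mul_pow, ← C_pow, ← C_eq_natCast, mul_comm, ← mul_assoc,
      ← C_mul, coeff_C_mul, coeff_X_pow]
    rcases eq_or_ne k i with hk | hk
    · subst hk; simp; ring
    · simp [hk, Ne.symm hk]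
  rw [Finset.sum_congr rfl ht, Finset.sum_ite_eq' (range (n + 1)) i]
  by_cases hi : i ≤ n
  · simp [Nat.lt_succ_of_le hi]
  · push_neg at hi
    simp [Nat.choose_eq_zero_of_lt hi, Nat.lt_succ, not_le.mpr hi]

/-- Lemma 9.4 of the paper: for natural numbers `p, z, i` with `i < p`, the alternating
sum `∑_{k=⌈i/(z+1)⌉}^{p} (-1)^{k+1} C(p,k) C(k(z+1), i)` vanishes; equivalently (since
`C(k(z+1),i) = 0` when `k(z+1) < i`) the same sum over all `0 ≤ k ≤ p` vanishes. -/
theorem stmt_0 (p z i : ℕ) (hip : i < p) :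
    (∑ k ∈ Finset.Icc (⌈(i : ℚ) / (z + 1)⌉).toNat p,
        (-1 : ℤ) ^ (k + 1) * (p.choose k) * ((k * (z + 1)).choose i) = 0) ∧
    (∑ k ∈ Finset.range (p + 1),
        (-1 : ℤ) ^ (k + 1) * (p.choose k) * ((k * (z + 1)).choose i) = 0) := by
  have hrange : ∑ k ∈ Finset.range (p + 1),
      (-1 : ℤ) ^ (k + 1) * (p.choose k) * ((k * (z + 1)).choose i) = 0 := by
    have hXdvd : (X : Polynomial ℤ) ∣ (1 - (1 - X) ^ (z + 1)) := by
      rw [Polynomial.X_dvd_iff]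
      simp [coeff_one_sub_X_pow]
    have hcoeff : ((1 - (1 - X : Polynomial ℤ) ^ (z + 1)) ^ p).coeff i = 0 :=
      Polynomial.X_pow_dvd_iff.mp (pow_dvd_pow_of_dvd hXdvd p) i hip
    have hexp : ((1 - (1 - X : Polynomial ℤ) ^ (z + 1)) ^ p).coeff i
        = ∑ k ∈ Finset.range (p + 1),
            (-1 : ℤ) ^ k * (-1) ^ i * ((k * (z + 1)).choose i) * (p.choose k) := by
      have h1 : (1 - (1 - X : Polynomial ℤ) ^ (z + 1))
          = (C (-1) * (1 - X) ^ (z + 1)) + 1 := by simp; ring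
      rw [h1, add_pow, finset_sum_coeff]
      refine Finset.sum_congr rfl fun k hk => ?_
      rw [one_pow, mul_one, mul_pow, ← C_pow, ← pow_mul, ← C_eq_natCast, mul_comm,
        ← mul_assoc, ← C_mul, coeff_C_mul, coeff_one_sub_X_pow, mul_comm (z + 1) k]
      ring
    have hzero : ∑ k ∈ Finset.range (p + 1),
        (-1 : ℤ) ^ k * (-1) ^ i * ((k * (z + 1)).choose i) * (p.choose k) = 0 :=
      hexp ▸ hcoeff
    have hodd : ((-1 : ℤ)) ^ (i + 1) * (-1) ^ i = -1 := by
      rw [← pow_add]; exact Odd.neg_one_pow ⟨i, by ring⟩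
    have h3 : (-1 : ℤ) ^ (i + 1) * ∑ k ∈ Finset.range (p + 1),
        (-1 : ℤ) ^ k * (-1) ^ i * ((k * (z + 1)).choose i) * (p.choose k) = 0 := by
      rw [hzero, mul_zero]
    rw [Finset.mul_sum] at h3
    rw [← h3]
    refine Finset.sum_congr rfl fun k _ => ?_
    linear_combination (-1 : ℤ) ^ (k + 1) * ((k * (z + 1)).choose i : ℤ) * (p.choose k : ℤ) * hodd
  refine ⟨?_, hrange⟩
  rw [← hrange]
  refine Finset.sum_subset ?_ ?_
  · intro k hk
    simp only [Finset.mem_Icc, Finset.mem_range] at *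
    omega
  · intro k hk hk2
    simp only [Finset.mem_Icc, Finset.mem_range, not_and, not_le] at hk hk2
    have hklt : k < (⌈(i : ℚ) / (z + 1)⌉).toNat := by omega
    have h4 : ((k : ℤ) : ℚ) < i / (z + 1) := Int.lt_ceil.mp (Int.lt_toNat.mp hklt)
    push_cast at h4
    have h5 : (k : ℚ) * (z + 1) < i := by
      rw [lt_div_iff₀ (by positivity)] at h4; exact h4
    have h6 : k * (z + 1) < i := by exact_mod_cast h5
    simp [Nat.choose_eq_zero_of_lt h6]
end

section
/- Let A be an additive abelian group, let p and z be natural numbers, and let f, g : ℕ → A. Suppose that (i) for every integer k with 1 ≤ k ≤ p one has ∑_{j=0}^{k(z+1)} (-1)^j · C(k(z+1), j) • f(j) = 0 and ∑_{j=0}^{k(z+1)} (-1)^j · C(k(z+1), j) • g(j) = 0, and (ii) f(j) = g(j) for every j with p ≤ j ≤ p(z+1). Then f(0) = g(0). -/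
open Finset Nat Function fwdDiff fwdDiff_aux

private lemma shiftl_one_pow (m : ℕ) :
    shiftₗ ℕ ℤ 1 ^ m = shiftₗ ℕ ℤ m := by
  ext f y
  rw [shiftₗ_pow_apply, shiftₗ_apply]
  simp [smul_eq_mul]

private lemma fwdDiffl_factor (m : ℕ) :
    fwdDiffₗ ℕ ℤ m = (∑ i ∈ Finset.range m, shiftₗ ℕ ℤ 1 ^ i) * fwdDiffₗ ℕ ℤ 1 := by
  have h1 : fwdDiffₗ ℕ ℤ m = shiftₗ ℕ ℤ m - 1 := by
    rw [shiftₗ, add_sub_cancel_right]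
  have h2 : fwdDiffₗ ℕ ℤ 1 = shiftₗ ℕ ℤ 1 - 1 := by
    rw [shiftₗ, add_sub_cancel_right]
  rw [h1, h2, geom_sum_mul, shiftl_one_pow]

private lemma iter_diff_choose_zero (j p : ℕ) (hj : j < p) :
    (Δ_[(1:ℕ)])^[p] (fun x : ℕ => (x.choose j : ℤ)) = fun _ => (0 : ℤ) := by
  obtain ⟨t, rfl⟩ := Nat.exists_eq_add_of_lt hj
  have h1 : (Δ_[(1:ℕ)])^[j + 1] (fun x : ℕ => (x.choose j : ℤ)) = fun _ => (0 : ℤ) := by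
    rw [add_comm j 1, Function.iterate_add_apply]
    have : (Δ_[(1:ℕ)])^[j] (fun x : ℕ => (x.choose j : ℤ)) = fun _ => (1 : ℤ) := by
      have := fwdDiff_iter_choose 0 j
      simpa using this
    rw [this, Function.iterate_one, fwdDiff_const]
  calc (Δ_[(1:ℕ)])^[j + t + 1] (fun x : ℕ => (x.choose j : ℤ))
      = (Δ_[(1:ℕ)])^[t] ((Δ_[(1:ℕ)])^[j + 1] (fun x : ℕ => (x.choose j : ℤ))) := by
        rw [show j + t + 1 = t + (j + 1) by omega, Function.iterate_add_apply]
    _ = fun _ => (0 : ℤ) := by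
        rw [h1]
        apply Function.iterate_fixed
        exact fwdDiff_const 1 (0 : ℤ)

private lemma iter_diff_m_choose_zero (m j p : ℕ) (hj : j < p) :
    (Δ_[m])^[p] (fun x : ℕ => (x.choose j : ℤ)) = fun _ => (0 : ℤ) := by
  set v : ℕ → ℤ := fun x : ℕ => (x.choose j : ℤ) with hv
  set S : Module.End ℤ (ℕ → ℤ) := ∑ i ∈ Finset.range m, shiftₗ ℕ ℤ 1 ^ i with hS
  set D : Module.End ℤ (ℕ → ℤ) := fwdDiffₗ ℕ ℤ 1 with hD
  have hcomm : Commute S D := by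
    apply Commute.sum_left
    intro i _
    apply Commute.pow_left
    have : shiftₗ ℕ ℤ 1 = D + 1 := rfl
    rw [this]
    exact (Commute.refl D).add_left (Commute.one_left D)
  have key : fwdDiffₗ ℕ ℤ m ^ p = S ^ p * D ^ p := by
    rw [fwdDiffl_factor m, ← hS, ← hD, hcomm.mul_pow]
  have hDp : (D ^ p) v = fun _ => (0 : ℤ) := by
    have := coe_fwdDiffₗ_pow (M := ℕ) (G := ℤ) (h := 1) p
    have h2 : (D ^ p) v = (Δ_[(1:ℕ)])^[p] v := by
      rw [hD, this]
    rw [h2, hv, iter_diff_choose_zero j p hj]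
  have : (fwdDiffₗ ℕ ℤ m ^ p) v = fun _ => (0 : ℤ) := by
    rw [key, Module.End.mul_apply, hDp]
    have : (fun _ : ℕ => (0 : ℤ)) = (0 : ℕ → ℤ) := rfl
    rw [this, map_zero]
  have h3 := coe_fwdDiffₗ_pow (M := ℕ) (G := ℤ) (h := m) p
  calc (Δ_[m])^[p] v = (fwdDiffₗ ℕ ℤ m ^ p) v := by rw [h3]
    _ = fun _ => (0 : ℤ) := this

private lemma key_sum (m p j : ℕ) (hj : j < p) :
    ∑ k ∈ Finset.range (p + 1),
      ((-1 : ℤ) ^ (p - k) * (p.choose k)) * ((k * m).choose j) = 0 := by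
  have h := fwdDiff_iter_eq_sum_shift (M := ℕ) (G := ℤ) m
    (fun x : ℕ => (x.choose j : ℤ)) p 0
  rw [iter_diff_m_choose_zero m j p hj] at h
  simp only [zero_add, smul_eq_mul] at h
  exact h.symm

/-- The combinatorial core of Theorem 9.7 of the paper: if `f g : ℕ → A` both annihilate
the alternating binomial sums of length `k(z+1)` for `1 ≤ k ≤ p`, and `f = g` on
`p ≤ j ≤ p(z+1)`, then `f 0 = g 0`. -/
theorem stmt_4 {A : Type*} [AddCommGroup A] (p z : ℕ) (f g : ℕ → A)
    (hf : ∀ k : ℕ, 1 ≤ k → k ≤ p →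
      ∑ j ∈ Finset.range (k * (z + 1) + 1),
        ((-1 : ℤ) ^ j * ((k * (z + 1)).choose j)) • f j = 0)
    (hg : ∀ k : ℕ, 1 ≤ k → k ≤ p →
      ∑ j ∈ Finset.range (k * (z + 1) + 1),
        ((-1 : ℤ) ^ j * ((k * (z + 1)).choose j)) • g j = 0)
    (hfg : ∀ j : ℕ, p ≤ j → j ≤ p * (z + 1) → f j = g j) :
    f 0 = g 0 := by
  rcases Nat.eq_zero_or_pos p with rfl | hp
  · exact hfg 0 (le_refl 0) (by simp)
  set m := z + 1 with hm
  set h : ℕ → A := fun j => f j - g j with hh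
  -- combined hypotheses for h
  have hS : ∀ k : ℕ, 1 ≤ k → k ≤ p →
      ∑ j ∈ Finset.range (k * m + 1),
        ((-1 : ℤ) ^ j * ((k * m).choose j)) • h j = 0 := by
    intro k hk1 hk2
    have := hf k hk1 hk2
    have h2 := hg k hk1 hk2
    rw [hh]
    simp only [smul_sub, Finset.sum_sub_distrib]
    rw [this, h2, sub_zero]
  -- extended sums over range (p*m+1)
  have hExt : ∀ k : ℕ, k ≤ p →
      ∑ j ∈ Finset.range (p * m + 1),
        ((-1 : ℤ) ^ j * ((k * m).choose j)) • h j
      = ∑ j ∈ Finset.range (k * m + 1),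
        ((-1 : ℤ) ^ j * ((k * m).choose j)) • h j := by
    intro k hk
    apply (Finset.sum_subset _ _).symm
    · apply Finset.range_subset_range.mpr
      have : k * m ≤ p * m := Nat.mul_le_mul_right m hk
      omega
    · intro j _ hj
      rw [Finset.mem_range, not_lt] at hj
      have : k * m < j := by omega
      rw [Nat.choose_eq_zero_of_lt this]
      simp
  -- the combined sum T
  set T : A := ∑ k ∈ Finset.range (p + 1),
      ((-1 : ℤ) ^ (p - k) * (p.choose k)) •
        (∑ j ∈ Finset.range (p * m + 1),
          ((-1 : ℤ) ^ j * ((k * m).choose j)) • h j) with hT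
  -- Way 1 : T = (-1)^p • h 0
  have way1 : T = ((-1 : ℤ) ^ p) • h 0 := by
    rw [hT]
    rw [Finset.sum_eq_single 0]
    · have hinner : ∑ j ∈ Finset.range (p * m + 1),
          ((-1 : ℤ) ^ j * ((0 * m).choose j)) • h j = h 0 := by
        rw [Finset.sum_eq_single 0]
        · simp
        · intro j _ hj
          rw [zero_mul, Nat.choose_eq_zero_of_lt (Nat.pos_of_ne_zero hj)]
          simp
        · intro habs
          exact absurd (Finset.mem_range.mpr (by omega)) (fun h' => habs h')
      rw [hinner]
      simp
    · intro k hk hk0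
      rw [Finset.mem_range] at hk
      have hk1 : 1 ≤ k := Nat.pos_of_ne_zero hk0
      have hk2 : k ≤ p := by omega
      rw [hExt k hk2, hS k hk1 hk2, smul_zero]
    · intro habs
      exact absurd (Finset.mem_range.mpr (by omega)) (fun h' => habs h')
  -- Way 2 : T = 0
  have way2 : T = 0 := by
    rw [hT]
    simp only [Finset.smul_sum, smul_smul]
    rw [Finset.sum_comm]
    apply Finset.sum_eq_zero
    intro j hj
    rw [Finset.mem_range] at hj
    rcases lt_or_ge j p with hjp | hjp
    · rw [← Finset.sum_smul]
      have : ∑ k ∈ Finset.range (p + 1),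
          ((-1 : ℤ) ^ (p - k) * (p.choose k)) * ((-1 : ℤ) ^ j * ((k * m).choose j)) =
          (-1 : ℤ) ^ j * ∑ k ∈ Finset.range (p + 1),
            ((-1 : ℤ) ^ (p - k) * (p.choose k)) * ((k * m).choose j) := by
        rw [Finset.mul_sum]
        apply Finset.sum_congr rfl
        intro k _
        ring
      rw [this, key_sum m p j hjp, mul_zero, zero_smul]
    · have : h j = 0 := by
        rw [hh]
        have := hfg j hjp (by omega)
        simp [this]
      simp [this]
  have h0 : ((-1 : ℤ) ^ p) • h 0 = 0 := by rw [← way1, way2]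
  have : h 0 = 0 := by
    have := congrArg (fun x => ((-1 : ℤ) ^ p) • x) h0
    simpa [smul_smul, ← mul_pow] using this
  rw [hh] at this
  exact sub_eq_zero.mp this
end

section
/- Let A be an additive abelian group, let p and z be natural numbers, and let f : ℕ → A satisfy ∑_{j=0}^{k(z+1)} (-1)^j · C(k(z+1), j) • f(j) = 0 for every integer k with 1 ≤ k ≤ p. Then f(0) = ∑_{j=p}^{p(z+1)} ( ∑_{k=⌈j/(z+1)⌉}^{p} (-1)^{k+j} · C(p,k) · C(k(z+1), j) ) • f(j). -/
open Finset Function fwdDiff fwdDiff_aux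


lemma aux_iter_zero (h : ℕ) (m : ℕ) : (Δ_[h])^[m] (0 : ℕ → ℤ) = 0 := by
  induction m with
  | zero => simp
  | succ n ih => rw [Function.iterate_succ_apply, show Δ_[h] (0 : ℕ → ℤ) = 0 by
      funext x; simp [fwdDiff], ih]

lemma aux_choose_zero (p j : ℕ) (hj : j < p) :
    (Δ_[(1:ℕ)])^[p] (fun x : ℕ => (x.choose j : ℤ)) = 0 := by
  obtain ⟨m, rfl⟩ : ∃ m, p = m + 1 + j := ⟨p - 1 - j, by omega⟩
  have hj0 : (Δ_[(1:ℕ)])^[j] (fun x : ℕ => (x.choose j : ℤ)) = fun _ : ℕ => (1:ℤ) := by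
    simpa using fwdDiff_iter_choose 0 j
  rw [Function.iterate_add_apply, hj0]
  rw [Function.iterate_add_apply, Function.iterate_one,
    show Δ_[(1:ℕ)] (fun _ : ℕ => (1:ℤ)) = 0 from fwdDiff_const 1 (1:ℤ), aux_iter_zero]

lemma aux_op_zero (p z j : ℕ) (hj : j < p) :
    (Δ_[(z+1:ℕ)])^[p] (fun x : ℕ => (x.choose j : ℤ)) = 0 := by
  set S : Module.End ℤ (ℕ → ℤ) := shiftₗ ℕ ℤ 1 with hSdef
  have hcomm : Commute (∑ i ∈ range (z+1), S ^ i) (S - 1) :=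
    Commute.sum_left _ _ _ fun i _ => ((Commute.refl S).sub_right (Commute.one_right S)).pow_left i
  have hD : fwdDiffₗ ℕ ℤ (z+1) = (∑ i ∈ range (z+1), S ^ i) * (S - 1) := by
    rw [geom_sum_mul]
    have h1 : shiftₗ ℕ ℤ (z+1) = S ^ (z+1) := by
      apply LinearMap.ext; intro f; funext y
      rw [shiftₗ_apply, hSdef, shiftₗ_pow_apply, smul_eq_mul, mul_one]
    rw [← h1, shiftₗ, add_sub_cancel_right]
  have hD1 : S - 1 = fwdDiffₗ ℕ ℤ 1 := by rw [hSdef, shiftₗ, add_sub_cancel_right]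
  have : (fwdDiffₗ ℕ ℤ (z+1)) ^ p = (∑ i ∈ range (z+1), S ^ i) ^ p * (fwdDiffₗ ℕ ℤ 1) ^ p := by
    rw [hD, hcomm.mul_pow, hD1]
  calc (Δ_[(z+1:ℕ)])^[p] (fun x : ℕ => (x.choose j : ℤ))
      = ((fwdDiffₗ ℕ ℤ (z+1)) ^ p) (fun x : ℕ => (x.choose j : ℤ)) := by
        rw [coe_fwdDiffₗ_pow]
    _ = ((∑ i ∈ range (z+1), S ^ i) ^ p) (((fwdDiffₗ ℕ ℤ 1) ^ p) (fun x : ℕ => (x.choose j : ℤ))) := by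
        rw [this, Module.End.mul_apply]
    _ = 0 := by
        have := coe_fwdDiffₗ_pow (1:ℕ) (G := ℤ) p
        rw [show ((fwdDiffₗ ℕ ℤ 1) ^ p) (fun x : ℕ => (x.choose j : ℤ))
            = (Δ_[(1:ℕ)])^[p] (fun x : ℕ => (x.choose j : ℤ)) from congrFun this _,
          aux_choose_zero p j hj, map_zero]

lemma lem94 (p z j : ℕ) (hj : j < p) :
    ∑ k ∈ Finset.range (p+1), (-1:ℤ)^(k+j) * (p.choose k) * ((k*(z+1)).choose j) = 0 := by
  have h0 := fwdDiff_iter_eq_sum_shift (M := ℕ) (G := ℤ) (z+1)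
    (fun x : ℕ => (x.choose j : ℤ)) p 0
  rw [aux_op_zero p z j hj] at h0
  have h1 : ∑ k ∈ range (p + 1),
      ((-1:ℤ) ^ (p - k) * ↑(p.choose k)) • (((0 + k • (z+1)).choose j : ℤ)) = 0 := h0.symm
  have h2 : ∑ k ∈ range (p+1), (-1:ℤ)^(k+j) * (p.choose k) * ((k*(z+1)).choose j)
      = (-1:ℤ)^(p+j) * ∑ k ∈ range (p + 1),
        ((-1:ℤ) ^ (p - k) * ↑(p.choose k)) • (((0 + k • (z+1)).choose j : ℤ)) := by
    rw [Finset.mul_sum]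
    refine Finset.sum_congr rfl fun k hk => ?_
    have hk' : k ≤ p := by simpa [Nat.lt_succ_iff] using hk
    rw [smul_eq_mul, zero_add, smul_eq_mul]
    have h2mul : ((-1:ℤ))^(2*(p-k)) = 1 := by rw [pow_mul]; norm_num
    have hsgn : (-1:ℤ)^(p+j) * (-1:ℤ)^(p-k) = (-1:ℤ)^(k+j) := by
      rw [← pow_add, show p + j + (p - k) = (k + j) + 2 * (p - k) by omega, pow_add, h2mul,
        mul_one]
    rw [← hsgn]; ring
  rw [h2, h1, mul_zero]


/-- The chain of equalities in the proof of Theorem 9.7: if `f : ℕ → A` annihilates the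
alternating binomial sums of length `k(z+1)` for `1 ≤ k ≤ p`, then
`f 0 = ∑_{j=p}^{p(z+1)} (∑_{k=⌈j/(z+1)⌉}^{p} (-1)^{k+j} C(p,k) C(k(z+1), j)) • f j`. -/
theorem stmt_5 {A : Type*} [AddCommGroup A] (p z : ℕ) (f : ℕ → A)
    (hf : ∀ k : ℕ, 1 ≤ k → k ≤ p →
      ∑ j ∈ Finset.range (k * (z + 1) + 1),
        ((-1 : ℤ) ^ j * ((k * (z + 1)).choose j)) • f j = 0) :
    f 0 = ∑ j ∈ Finset.Icc p (p * (z + 1)),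
      (∑ k ∈ Finset.Icc (⌈(j : ℚ) / (z + 1)⌉).toNat p,
          (-1 : ℤ) ^ (k + j) * (p.choose k) * ((k * (z + 1)).choose j)) • f j := by
  set c : ℕ → ℤ := fun j => ∑ k ∈ range (p+1),
    (-1:ℤ)^(k+j) * (p.choose k) * ((k*(z+1)).choose j) with hc
  have hsum : ∑ k ∈ range (p+1), ((-1:ℤ)^k * (p.choose k)) •
      (∑ j ∈ Finset.range (k * (z + 1) + 1),
        ((-1 : ℤ) ^ j * ((k * (z + 1)).choose j)) • f j) = f 0 := by
    rw [Finset.sum_eq_single_of_mem 0 (Finset.mem_range.mpr (by omega))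
      (fun k _ hk0 => by
        rw [hf k (by omega) (by simpa [Nat.lt_succ_iff] using ‹k ∈ range (p+1)›), smul_zero])]
    simp
  have hstep : ∀ k ∈ range (p+1),
      ((-1:ℤ)^k * (p.choose k)) • (∑ j ∈ Finset.range (k * (z + 1) + 1),
        ((-1 : ℤ) ^ j * ((k * (z + 1)).choose j)) • f j)
      = ∑ j ∈ range (p*(z+1)+1),
          ((-1:ℤ)^(k+j) * (p.choose k) * ((k*(z+1)).choose j)) • f j := by
    intro k hk
    have hk' : k ≤ p := by simpa [Nat.lt_succ_iff] using hk
    have hmul : k*(z+1) ≤ p*(z+1) := Nat.mul_le_mul_right _ hk'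
    have hsub : range (k*(z+1)+1) ⊆ range (p*(z+1)+1) := by
      intro j hj
      rw [Finset.mem_range] at hj ⊢
      omega
    rw [Finset.smul_sum,
      Finset.sum_subset hsub
      (by
        intro j hj hj2
        rw [Finset.mem_range, not_lt] at hj2
        rw [Nat.choose_eq_zero_of_lt (show k*(z+1) < j by omega)]
        simp)]
    refine Finset.sum_congr rfl fun j hj => ?_
    rw [smul_smul]
    congr 1
    rw [pow_add]
    ring
  have hA : f 0 = ∑ j ∈ range (p*(z+1)+1), c j • f j := by
    calc f 0 = ∑ k ∈ range (p+1), ((-1:ℤ)^k * (p.choose k)) •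
        (∑ j ∈ Finset.range (k * (z + 1) + 1),
          ((-1 : ℤ) ^ j * ((k * (z + 1)).choose j)) • f j) := hsum.symm
      _ = ∑ k ∈ range (p+1), ∑ j ∈ range (p*(z+1)+1),
          ((-1:ℤ)^(k+j) * (p.choose k) * ((k*(z+1)).choose j)) • f j :=
        Finset.sum_congr rfl hstep
      _ = ∑ j ∈ range (p*(z+1)+1), ∑ k ∈ range (p+1),
          ((-1:ℤ)^(k+j) * (p.choose k) * ((k*(z+1)).choose j)) • f j := Finset.sum_comm
      _ = ∑ j ∈ range (p*(z+1)+1), c j • f j := by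
          refine Finset.sum_congr rfl fun j _ => ?_
          rw [hc, Finset.sum_smul]
  have hB : ∑ j ∈ Finset.Icc p (p*(z+1)), c j • f j
      = ∑ j ∈ range (p*(z+1)+1), c j • f j := by
    refine Finset.sum_subset (fun j hj => ?_) (fun j hj hj2 => ?_)
    · rw [Finset.mem_Icc] at hj; rw [Finset.mem_range]; omega
    · rw [Finset.mem_range] at hj
      rw [Finset.mem_Icc, not_and_or] at hj2
      have hjp : j < p := by omega
      have h0 : c j = 0 := lem94 p z j hjp
      rw [h0, zero_smul]
  have hC : ∀ j ∈ Finset.Icc p (p*(z+1)),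
      (∑ k ∈ Finset.Icc (⌈(j : ℚ) / (z + 1)⌉).toNat p,
          (-1 : ℤ) ^ (k + j) * (p.choose k) * ((k * (z + 1)).choose j)) = c j := by
    intro j hj
    have h1 : c j = ∑ k ∈ range (p+1),
        (-1:ℤ)^(k+j) * (p.choose k) * ((k*(z+1)).choose j) := rfl
    rw [h1]
    refine Finset.sum_subset (fun k hk => ?_) (fun k hk hk2 => ?_)
    · rw [Finset.mem_Icc] at hk; rw [Finset.mem_range]; omega
    · rw [Finset.mem_range, Nat.lt_succ_iff] at hk
      rw [Finset.mem_Icc, not_and_or] at hk2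
      have hkt : k < (⌈(j : ℚ) / (z + 1)⌉).toNat := by omega
      have h1 : ((k:ℤ) : ℚ) < (j : ℚ) / (z + 1) := by
        apply Int.lt_ceil.mp
        exact_mod_cast Int.lt_toNat.mp hkt
      have h2 : (k:ℚ) * ((z:ℚ) + 1) < (j:ℚ) := by
        rw [← lt_div_iff₀ (by positivity)]
        exact_mod_cast h1
      have h3 : k * (z+1) < j := by exact_mod_cast (by push_cast; exact h2 :
        ((k*(z+1) : ℕ) : ℚ) < ((j:ℕ):ℚ))
      rw [Nat.choose_eq_zero_of_lt h3]
      simp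
  rw [Finset.sum_congr rfl (fun j hj => by rw [hC j hj]), hB]
  exact hA
end
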